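/- arXiv:0710.0194 — 2 statements merged into one kernel-verified Lean document; each statement's English description precedes it below -/
import Mathlib

section
/- Sym^𝔤 is simple as a *-algebra: if I ⊆ Sym^𝔤 is a nonzero ℂ-subspace such that [f, ω]_k ∈ I and [ω, f]_k ∈ I for all f ∈ Sym^𝔤, all ω ∈ I, and all k ≥ 0, then 1 ∈ I, and hence I = Sym^𝔤. -/
open MvPolynomial TensorProduct

noncomputable section

/-- The polynomial ring `Q = ℂ[x_1,…,x_n,y_1,…,y_n]`; the variable `x_j` is
`X (Sum.inl j)` and `y_j` is `X (Sum.inr j)`. -/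
abbrev Qn (n : ℕ) := MvPolynomial (Fin n ⊕ Fin n) ℂ

/-- The operator `Γ = ∑_i (∂/∂x_i ⊗ ∂/∂y_i − ∂/∂y_i ⊗ ∂/∂x_i)` on `Q ⊗_ℂ Q`. -/
def Gam (n : ℕ) : Module.End ℂ (Qn n ⊗[ℂ] Qn n) :=
  ∑ i : Fin n,
    (TensorProduct.map (pderiv (Sum.inl i)).toLinearMap (pderiv (Sum.inr i)).toLinearMap
      - TensorProduct.map (pderiv (Sum.inr i)).toLinearMap (pderiv (Sum.inl i)).toLinearMap)

/-- The `k`-th transvectant `[f,g]_k = m(Γ^k(f ⊗ g))`, where `m` is multiplication. -/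
def transv (n k : ℕ) (f g : Qn n) : Qn n :=
  LinearMap.mul' ℂ (Qn n) ((Gam n ^ k) (f ⊗ₜ[ℂ] g))

/-- The orthogonal complement `A^⊥ = {u ∈ ℂ^n : ∑_j u_j a_j = 0 for all a ∈ A}`. -/
def perpC (n : ℕ) (A : Submodule ℂ (Fin n → ℂ)) : Set (Fin n → ℂ) :=
  {u | ∀ v ∈ A, ∑ j, u j * v j = 0}

/-- `Sym^𝔤`: the ℂ-linear span of the monomials `x^b y^a` with `a - b ∈ A^⊥`. -/
def SymG (n : ℕ) (A : Submodule ℂ (Fin n → ℂ)) : Submodule ℂ (Qn n) :=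
  Submodule.span ℂ {q : Qn n | ∃ a b : Fin n → ℕ,
    (fun j => ((a j : ℂ) - (b j : ℂ))) ∈ perpC n A ∧
    q = (∏ j : Fin n, (X (Sum.inl j) : Qn n) ^ b j) *
        ∏ j : Fin n, (X (Sum.inr j) : Qn n) ^ a j}

/-! ### Auxiliary lemmas -/

lemma pderiv_comm' {σ : Type*} (i j : σ) (p : MvPolynomial σ ℂ) :
    pderiv i (pderiv j p) = pderiv j (pderiv i p) := by
  classical
  induction p using MvPolynomial.induction_on' with
  | monomial s a =>
    simp only [pderiv_monomial]
    by_cases h : i = j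
    · subst h; rfl
    · have h1 : (s - Finsupp.single j 1 : _ →₀ ℕ) i = s i := by
        rw [Finsupp.tsub_apply, Finsupp.single_eq_of_ne' (Ne.symm h), tsub_zero]
      have h2 : (s - Finsupp.single i 1 : _ →₀ ℕ) j = s j := by
        rw [Finsupp.tsub_apply, Finsupp.single_eq_of_ne' h, tsub_zero]
      rw [h1, h2, tsub_tsub, tsub_tsub, add_comm]
      ring_nf
  | add p q hp hq => simp [hp, hq]

lemma Gam_tmul (n : ℕ) (f g : Qn n) :
    Gam n (f ⊗ₜ[ℂ] g) = ∑ i : Fin n,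
      ((pderiv (Sum.inl i) f) ⊗ₜ[ℂ] (pderiv (Sum.inr i) g)
        - (pderiv (Sum.inr i) f) ⊗ₜ[ℂ] (pderiv (Sum.inl i) g)) := by
  simp [Gam, LinearMap.sum_apply, TensorProduct.map_tmul]

lemma transv_zero (n : ℕ) (f g : Qn n) : transv n 0 f g = f * g := by
  simp [transv]

lemma Gam_xy_tmul (n : ℕ) (j : Fin n) (ω : Qn n) :
    Gam n ((X (Sum.inl j) * X (Sum.inr j)) ⊗ₜ[ℂ] ω)
      = (X (Sum.inr j)) ⊗ₜ[ℂ] (pderiv (Sum.inr j) ω)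
        - (X (Sum.inl j)) ⊗ₜ[ℂ] (pderiv (Sum.inl j) ω) := by
  rw [Gam_tmul]
  rw [Finset.sum_eq_single j]
  · simp [pderiv_mul]
  · intro i _ hij
    simp [pderiv_mul, pderiv_X_of_ne, Sum.inl.injEq, Sum.inr.injEq, hij, Ne.symm hij]
  · simp

lemma transv_one_xy (n : ℕ) (j : Fin n) (ω : Qn n) :
    transv n 1 (X (Sum.inl j) * X (Sum.inr j)) ω
      = X (Sum.inr j) * pderiv (Sum.inr j) ω - X (Sum.inl j) * pderiv (Sum.inl j) ω := by
  rw [transv, pow_one, Gam_xy_tmul]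
  simp

lemma transv_two_xy (n : ℕ) (j : Fin n) (ω : Qn n) :
    transv n 2 (X (Sum.inl j) * X (Sum.inr j)) ω
      = -(2 : ℂ) • pderiv (Sum.inl j) (pderiv (Sum.inr j) ω) := by
  rw [transv, pow_two, Module.End.mul_apply, Gam_xy_tmul, map_sub, Gam_tmul, Gam_tmul]
  rw [Finset.sum_eq_single j, Finset.sum_eq_single j]
  · simp only [pderiv_X_self, pderiv_X_of_ne (by simp : (Sum.inl j : Fin n ⊕ Fin n) ≠ Sum.inr j),
      pderiv_X_of_ne (by simp : (Sum.inr j : Fin n ⊕ Fin n) ≠ Sum.inl j),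
      zero_tmul, map_sub, sub_zero, zero_sub]
    rw [pderiv_comm' (Sum.inr j) (Sum.inl j) ω]
    simp only [map_sub, map_neg, LinearMap.mul'_apply, one_mul]
    rw [neg_smul, two_smul]
    ring
  · intro i _ hij
    simp [pderiv_X_of_ne, Sum.inl.injEq, Sum.inr.injEq, hij, Ne.symm hij]
  · simp
  · intro i _ hij
    simp [pderiv_X_of_ne, Sum.inl.injEq, Sum.inr.injEq, hij, Ne.symm hij]
  · simp

/-- The exponent finsupp of the monomial `x^b y^a`. -/
def expo (n : ℕ) (a b : Fin n → ℕ) : (Fin n ⊕ Fin n) →₀ ℕ :=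
  (∑ j : Fin n, Finsupp.single (Sum.inl j) (b j))
    + ∑ j : Fin n, Finsupp.single (Sum.inr j) (a j)

lemma expo_inl (n : ℕ) (a b : Fin n → ℕ) (i : Fin n) : expo n a b (Sum.inl i) = b i := by
  simp only [expo, Finsupp.add_apply, Finsupp.finset_sum_apply, Finsupp.single_apply]
  rw [Finset.sum_eq_single i (by intro j _ hj; simp [hj]) (by simp),
      Finset.sum_eq_zero (by intro j _; simp)]
  simp

lemma expo_inr (n : ℕ) (a b : Fin n → ℕ) (i : Fin n) : expo n a b (Sum.inr i) = a i := by
  simp only [expo, Finsupp.add_apply, Finsupp.finset_sum_apply, Finsupp.single_apply]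
  rw [Finset.sum_eq_zero (by intro j _; simp),
      Finset.sum_eq_single i (by intro j _ hj; simp [hj]) (by simp)]
  simp

lemma prod_eq_monomial (n : ℕ) (a b : Fin n → ℕ) :
    (∏ j : Fin n, (X (Sum.inl j) : Qn n) ^ b j) * ∏ j : Fin n, (X (Sum.inr j) : Qn n) ^ a j
      = monomial (expo n a b) 1 := by
  simp only [X_pow_eq_monomial, ← monomial_sum_one, expo, monomial_mul, one_mul]

lemma expo_self (n : ℕ) (d : (Fin n ⊕ Fin n) →₀ ℕ) :
    expo n (fun j => d (Sum.inr j)) (fun j => d (Sum.inl j)) = d := by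
  ext v
  cases v with
  | inl i => rw [expo_inl]
  | inr i => rw [expo_inr]

/-- Membership of a monomial in `SymG`. -/
lemma monomial_mem_SymG (n : ℕ) (A : Submodule ℂ (Fin n → ℂ)) (d : (Fin n ⊕ Fin n) →₀ ℕ)
    (h : (fun j => ((d (Sum.inr j) : ℂ) - (d (Sum.inl j) : ℂ))) ∈ perpC n A) :
    monomial d (1 : ℂ) ∈ SymG n A := by
  apply Submodule.subset_span
  refine ⟨fun j => d (Sum.inr j), fun j => d (Sum.inl j), h, ?_⟩
  rw [prod_eq_monomial, expo_self]

/-- Conversely, monomials appearing in elements of `SymG` satisfy the constraint. -/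
lemma coeff_SymG (n : ℕ) (A : Submodule ℂ (Fin n → ℂ)) (q : Qn n) (hq : q ∈ SymG n A)
    (d : (Fin n ⊕ Fin n) →₀ ℕ) (hd : coeff d q ≠ 0) :
    (fun j => ((d (Sum.inr j) : ℂ) - (d (Sum.inl j) : ℂ))) ∈ perpC n A := by
  induction hq using Submodule.span_induction with
  | mem q hq =>
    obtain ⟨a, b, hab, rfl⟩ := hq
    rw [prod_eq_monomial, coeff_monomial] at hd
    split_ifs at hd with h
    · subst h
      convert hab using 2 with j
      rw [expo_inl, expo_inr]
    · exact absurd rfl hd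
  | zero => simp at hd
  | add p q _ _ hp hq =>
    rw [coeff_add] at hd
    by_cases h : coeff d p = 0
    · exact hq (by simpa [h] using hd)
    · exact hp h
  | smul c p _ hp =>
    rw [coeff_smul] at hd
    exact hp (by rintro h; simp [h] at hd)

lemma coeff_X_mul_pderiv (n : ℕ) (v : Fin n ⊕ Fin n) (ω : Qn n) (s : (Fin n ⊕ Fin n) →₀ ℕ) :
    coeff s (X v * pderiv v ω) = (s v : ℂ) * coeff s ω := by
  have key : ∀ (t : (Fin n ⊕ Fin n) →₀ ℕ) (r : ℂ),
      X v * pderiv v (monomial t r) = (t v : ℂ) • monomial t r := by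
    intro t r
    rw [pderiv_monomial]
    by_cases h : t v = 0
    · simp [h]
    · rw [X, monomial_mul, smul_monomial]
      congr 1
      · rw [add_tsub_cancel_of_le]
        rwa [Finsupp.single_le_iff, Nat.one_le_iff_ne_zero]
      · rw [smul_eq_mul, one_mul, mul_comm]
  induction ω using MvPolynomial.induction_on' with
  | monomial t r =>
    rw [key, coeff_smul, coeff_monomial]
    split_ifs with h
    · subst h; rw [smul_eq_mul]
    · simp
  | add p q hp hq =>
    rw [map_add, mul_add, coeff_add, coeff_add, hp, hq, mul_add]


/-- `Sym^𝔤` is simple as a `*`-algebra: any nonzero subspace `I ⊆ Sym^𝔤`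
closed under transvecting (on either side) with elements of `Sym^𝔤` contains `1`, and
hence equals `Sym^𝔤`. -/
theorem stmt11 (n : ℕ) (hn : 1 ≤ n) (A : Submodule ℂ (Fin n → ℂ))
    (I : Submodule ℂ (Qn n)) (hI : I ≤ SymG n A) (hne : I ≠ ⊥)
    (hclosed : ∀ f ∈ SymG n A, ∀ ω ∈ I, ∀ k : ℕ,
      transv n k f ω ∈ I ∧ transv n k ω f ∈ I) :
    (1 : Qn n) ∈ I ∧ I = SymG n A := by
  classical
  -- x_j y_j ∈ SymG
  have hxyS : ∀ j : Fin n, (X (Sum.inl j) * X (Sum.inr j) : Qn n) ∈ SymG n A := by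
    intro j
    have hd : (X (Sum.inl j) * X (Sum.inr j) : Qn n)
        = monomial (expo n (fun i => if i = j then 1 else 0) (fun i => if i = j then 1 else 0)) 1 := by
      rw [← prod_eq_monomial]
      congr 1
      · rw [Finset.prod_eq_single j (by intro i _ hij; simp [hij]) (by simp)]; simp
      · rw [Finset.prod_eq_single j (by intro i _ hij; simp [hij]) (by simp)]; simp
    rw [hd]
    apply monomial_mem_SymG
    intro v _
    apply Finset.sum_eq_zero
    intro i _
    simp [expo_inl, expo_inr]
  -- multiplication by elements of SymG
  have hmul : ∀ f ∈ SymG n A, ∀ ω ∈ I, f * ω ∈ I := by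
    intro f hf ω hω
    have := (hclosed f hf ω hω 0).1
    rwa [transv_zero] at this
  -- mixed second derivative
  have hD : ∀ (j : Fin n), ∀ ω ∈ I, pderiv (Sum.inl j) (pderiv (Sum.inr j) ω) ∈ I := by
    intro j ω hω
    have h2 := (hclosed _ (hxyS j) ω hω 2).1
    rw [transv_two_xy] at h2
    have h3 := I.smul_mem (-(2 : ℂ))⁻¹ h2
    rwa [smul_smul, inv_mul_cancel₀ (by norm_num), one_smul] at h3
  -- the Euler-type operators
  have hT : ∀ (v : Fin n ⊕ Fin n), ∀ ω ∈ I, X v * pderiv v ω ∈ I := by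
    have key : ∀ (j : Fin n), ∀ ω ∈ I,
        X (Sum.inl j) * pderiv (Sum.inl j) ω ∈ I ∧ X (Sum.inr j) * pderiv (Sum.inr j) ω ∈ I := by
      intro j ω hω
      have hdiff := (hclosed _ (hxyS j) ω hω 1).1
      rw [transv_one_xy] at hdiff
      have hplus : X (Sum.inl j) * pderiv (Sum.inl j) ω
          + X (Sum.inr j) * pderiv (Sum.inr j) ω ∈ I := by
        have h0 : X (Sum.inl j) * X (Sum.inr j) * ω ∈ I := hmul _ (hxyS j) ω hω
        have hdd := hD j _ h0
        have expand : pderiv (Sum.inl j) (pderiv (Sum.inr j) (X (Sum.inl j) * X (Sum.inr j) * ω))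
            = ω + (X (Sum.inl j) * pderiv (Sum.inl j) ω + X (Sum.inr j) * pderiv (Sum.inr j) ω)
              + X (Sum.inl j) * X (Sum.inr j) * pderiv (Sum.inl j) (pderiv (Sum.inr j) ω) := by
          simp only [pderiv_mul, pderiv_X_self, map_add, map_mul, map_zero, pderiv_one,
            pderiv_X_of_ne (show (Sum.inl j : Fin n ⊕ Fin n) ≠ Sum.inr j by simp),
            pderiv_X_of_ne (show (Sum.inr j : Fin n ⊕ Fin n) ≠ Sum.inl j by simp),
            zero_mul, mul_zero, add_zero, zero_add, mul_one, one_mul]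
          ring
        rw [expand] at hdd
        have := sub_mem (sub_mem hdd hω) (hmul _ (hxyS j) _ (hD j ω hω))
        convert this using 1
        ring
      constructor
      · have h1 := I.smul_mem (2 : ℂ)⁻¹ (sub_mem hplus hdiff)
        convert h1 using 1
        module
      · have h1 := I.smul_mem (2 : ℂ)⁻¹ (add_mem hplus hdiff)
        convert h1 using 1
        module
    rintro (j | j) ω hω
    · exact (key j ω hω).1
    · exact (key j ω hω).2
  -- I contains each monomial of each of its elements
  have hmono : ∀ (N : ℕ) (ω : Qn n), ω ∈ I → ω.support.card ≤ N →
      ∀ d ∈ ω.support, monomial d (1 : ℂ) ∈ I := by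
    intro N
    induction N with
    | zero =>
      intro ω hω hc d hd
      rw [Nat.le_zero, Finset.card_eq_zero] at hc
      simp [hc] at hd
    | succ N ih =>
      intro ω hω hc d hd
      by_cases hall : ∀ d' ∈ ω.support, d' = d
      · have hsupp : ω.support = {d} := Finset.eq_singleton_iff_unique_mem.mpr ⟨hd, hall⟩
        set c := coeff d ω with hc
        have hωeq : ω = monomial d c := by
          conv_lhs => rw [ω.as_sum]
          rw [hsupp, Finset.sum_singleton]
        have hcoeff : c ≠ 0 := mem_support_iff.mp hd
        have hsm : c⁻¹ • ω ∈ I := I.smul_mem _ hω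
        rw [hωeq, smul_monomial, smul_eq_mul, inv_mul_cancel₀ hcoeff] at hsm
        exact hsm
      · push_neg at hall
        obtain ⟨d', hd's, hd'ne⟩ := hall
        have hvex : ∃ v, d' v ≠ d v := by
          by_contra h
          push_neg at h
          exact hd'ne (Finsupp.ext h)
        obtain ⟨v, hv⟩ := hvex
        set ω' := X v * pderiv v ω - (d' v : ℂ) • ω with hω'def
        have hω'I : ω' ∈ I := sub_mem (hT v ω hω) (I.smul_mem _ hω)
        have hcoeff' : ∀ s, coeff s ω' = ((s v : ℂ) - d' v) * coeff s ω := by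
          intro s
          rw [hω'def, coeff_sub, coeff_smul, coeff_X_mul_pderiv, smul_eq_mul]
          ring
        have hsub : ω'.support ⊆ ω.support.erase d' := by
          intro s hs
          rw [mem_support_iff, hcoeff'] at hs
          refine Finset.mem_erase.mpr ⟨?_, mem_support_iff.mpr fun h => hs (by rw [h, mul_zero])⟩
          rintro rfl
          exact hs (by rw [sub_self, zero_mul])
        have hcard : ω'.support.card ≤ N := by
          calc ω'.support.card ≤ (ω.support.erase d').card := Finset.card_le_card hsub
          _ = ω.support.card - 1 := Finset.card_erase_of_mem hd's
          _ ≤ N := by omega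
        have hdmem : d ∈ ω'.support := by
          rw [mem_support_iff, hcoeff']
          have hne2 : ((d v : ℂ) - d' v) ≠ 0 := by
            rw [sub_ne_zero]
            exact_mod_cast Ne.symm hv
          exact mul_ne_zero hne2 (mem_support_iff.mp hd)
        exact ih ω' hω'I hcard d hdmem
  -- constants in I give 1 ∈ I
  have hconst : ∀ r : ℂ, r ≠ 0 → monomial (0 : (Fin n ⊕ Fin n) →₀ ℕ) r ∈ I → (1 : Qn n) ∈ I := by
    intro r hr hmem
    have := I.smul_mem r⁻¹ hmem
    rwa [smul_monomial, smul_eq_mul, inv_mul_cancel₀ hr, monomial_zero', C_1] at this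
  -- balanced monomials reduce to 1
  have hbal : ∀ (N : ℕ) (e : (Fin n ⊕ Fin n) →₀ ℕ) (r : ℂ), r ≠ 0 →
      (∀ j, e (Sum.inl j) = e (Sum.inr j)) → (∑ j : Fin n, e (Sum.inl j)) ≤ N →
      monomial e r ∈ I → (1 : Qn n) ∈ I := by
    intro N
    induction N with
    | zero =>
      intro e r hr hb hsum hmem
      have he : e = 0 := by
        ext v
        have hz : ∀ j : Fin n, e (Sum.inl j) = 0 := by
          intro j
          have := Finset.sum_eq_zero_iff.mp (Nat.le_zero.mp hsum) j (Finset.mem_univ j)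
          exact this
        cases v with
        | inl i => simp [hz i]
        | inr i => simp [← hb i, hz i]
      rw [he] at hmem
      exact hconst r hr hmem
    | succ N ih =>
      intro e r hr hb hsum hmem
      by_cases hz : ∀ j : Fin n, e (Sum.inl j) = 0
      · have he : e = 0 := by
          ext v
          cases v with
          | inl i => simp [hz i]
          | inr i => simp [← hb i, hz i]
        rw [he] at hmem
        exact hconst r hr hmem
      · push_neg at hz
        obtain ⟨j, hj⟩ := hz
        have hDm := hD j _ hmem
        set e' : (Fin n ⊕ Fin n) →₀ ℕ :=
          e - Finsupp.single (Sum.inr j) 1 - Finsupp.single (Sum.inl j) 1 with he'def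
        have h'l : ∀ i, e' (Sum.inl i) = e (Sum.inl i) - (if j = i then 1 else 0) := by
          intro i
          rw [he'def, Finsupp.tsub_apply, Finsupp.tsub_apply]
          simp [Finsupp.single_apply]
        have h'r : ∀ i, e' (Sum.inr i) = e (Sum.inr i) - (if j = i then 1 else 0) := by
          intro i
          rw [he'def, Finsupp.tsub_apply, Finsupp.tsub_apply]
          simp [Finsupp.single_apply]
        have hmid : (e - Finsupp.single (Sum.inr j) 1 : _ →₀ ℕ) (Sum.inl j) = e (Sum.inl j) := by
          rw [Finsupp.tsub_apply]
          simp [Finsupp.single_apply]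
        have hDcalc : pderiv (Sum.inl j) (pderiv (Sum.inr j) (monomial e r))
            = monomial e' (r * e (Sum.inr j) * e (Sum.inl j)) := by
          rw [pderiv_monomial, pderiv_monomial, hmid, he'def]
        rw [hDcalc] at hDm
        have hr' : (r * e (Sum.inr j) * e (Sum.inl j) : ℂ) ≠ 0 := by
          have h1 : (e (Sum.inl j) : ℂ) ≠ 0 := Nat.cast_ne_zero.mpr hj
          have h2 : (e (Sum.inr j) : ℂ) ≠ 0 := Nat.cast_ne_zero.mpr (by rwa [← hb j])
          exact mul_ne_zero (mul_ne_zero hr h2) h1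
        have hb' : ∀ i, e' (Sum.inl i) = e' (Sum.inr i) := by
          intro i
          rw [h'l, h'r, hb i]
        have hsum' : (∑ i : Fin n, e' (Sum.inl i)) ≤ N := by
          have hlt : (∑ i : Fin n, e' (Sum.inl i)) < ∑ i : Fin n, e (Sum.inl i) := by
            apply Finset.sum_lt_sum
            · intro i _
              rw [h'l]
              split_ifs <;> omega
            · exact ⟨j, Finset.mem_univ j, by rw [h'l, if_pos rfl]; omega⟩
          omega
        exact ih e' _ hr' hb' hsum' hDm
  -- get a monomial in I
  obtain ⟨ω, hωI, hω0⟩ := (Submodule.ne_bot_iff I).mp hne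
  have hsne : ω.support ≠ ∅ := fun h => hω0 (support_eq_empty.mp h)
  obtain ⟨d, hd⟩ := Finset.nonempty_of_ne_empty hsne
  have hmonoI : monomial d (1 : ℂ) ∈ I := hmono ω.support.card ω hωI le_rfl d hd
  have hcond : (fun j => ((d (Sum.inr j) : ℂ) - (d (Sum.inl j) : ℂ))) ∈ perpC n A :=
    coeff_SymG n A ω (hI hωI) d (mem_support_iff.mp hd)
  set d' := expo n (fun j => d (Sum.inl j)) (fun j => d (Sum.inr j)) with hd'def
  have hd'S : monomial d' (1 : ℂ) ∈ SymG n A := by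
    apply monomial_mem_SymG
    intro v hv
    have h0 := hcond v hv
    have heach : ∀ j : Fin n, ((d' (Sum.inr j) : ℂ) - (d' (Sum.inl j) : ℂ)) * v j
        = -(((d (Sum.inr j) : ℂ) - (d (Sum.inl j) : ℂ)) * v j) := by
      intro j
      rw [hd'def, expo_inl, expo_inr]
      ring
    calc ∑ j, ((d' (Sum.inr j) : ℂ) - (d' (Sum.inl j) : ℂ)) * v j
        = ∑ j, -(((d (Sum.inr j) : ℂ) - (d (Sum.inl j) : ℂ)) * v j) :=
          Finset.sum_congr rfl fun j _ => heach j
      _ = -∑ j, ((d (Sum.inr j) : ℂ) - (d (Sum.inl j) : ℂ)) * v j := by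
          rw [Finset.sum_neg_distrib]
      _ = 0 := by rw [h0, neg_zero]
  have hprodI : monomial (d' + d) (1 : ℂ) ∈ I := by
    have := hmul _ hd'S _ hmonoI
    rwa [monomial_mul, one_mul] at this
  have h1 : (1 : Qn n) ∈ I := by
    refine hbal (∑ j : Fin n, (d' + d) (Sum.inl j)) (d' + d) 1 one_ne_zero ?_ le_rfl hprodI
    intro i
    rw [Finsupp.add_apply, Finsupp.add_apply, hd'def, expo_inl, expo_inr, Nat.add_comm]
  refine ⟨h1, le_antisymm hI ?_⟩
  intro f hf
  have := (hclosed f hf 1 h1 0).1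
  rwa [transv_zero, mul_one] at this


end
end

section
/- Let A be the ℂ-subalgebra of the polynomial ring ℂ[X] generated by the two polynomials X² + X and 2X³ + 3X² + X. Then ℂ[X] is the internal direct sum of A and the one-dimensional subspace ℂ·X: every polynomial in ℂ[X] can be written uniquely as an element of A plus a scalar multiple of X; in particular A has codimension one in ℂ[X] and X ∉ A. -/
open Polynomial

noncomputable section

/-- The ℂ-subalgebra of `ℂ[X]` generated by `X² + X` and `2X³ + 3X² + X`. -/
def zhuImage : Subalgebra ℂ (Polynomial ℂ) :=
  Algebra.adjoin ℂ
    ({X ^ 2 + X, 2 * X ^ 3 + 3 * X ^ 2 + X} : Set (Polynomial ℂ))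

lemma eval_eq_of_mem {p : Polynomial ℂ} (hp : p ∈ zhuImage) :
    p.eval 0 = p.eval (-1) := by
  induction hp using Algebra.adjoin_induction with
  | mem x hx => rcases hx with h | h <;> subst h <;> simp <;> ring
  | algebraMap r => simp
  | add x y hx hy ihx ihy => simp [ihx, ihy]
  | mul x y hx hy ihx ihy => simp [ihx, ihy]

lemma f_mem : (X ^ 2 + X : Polynomial ℂ) ∈ zhuImage :=
  Algebra.subset_adjoin (by simp)

lemma g_mem : (2 * X ^ 3 + 3 * X ^ 2 + X : Polynomial ℂ) ∈ zhuImage :=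
  Algebra.subset_adjoin (by simp)

lemma fX_mem : (X ^ 2 + X : Polynomial ℂ) * X ∈ zhuImage := by
  have h2 : (2 * X ^ 3 + 3 * X ^ 2 + X : Polynomial ℂ) - (X ^ 2 + X)
      = (2 : ℂ) • ((X ^ 2 + X) * X) := by
    rw [smul_eq_C_mul]
    rw [show (C (2:ℂ) : Polynomial ℂ) = 2 from C_eq_natCast 2]
    ring
  have h : ((X ^ 2 + X : Polynomial ℂ) * X)
      = (1/2 : ℂ) • ((2 * X ^ 3 + 3 * X ^ 2 + X) - (X ^ 2 + X)) := by
    rw [h2, smul_smul]; norm_num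
  rw [h]
  exact zhuImage.smul_mem (zhuImage.sub_mem g_mem f_mem) _

lemma fXpow_mem : ∀ n : ℕ, (X ^ 2 + X : Polynomial ℂ) * X ^ n ∈ zhuImage := by
  have key : ∀ n : ℕ, (X ^ 2 + X : Polynomial ℂ) * X ^ n ∈ zhuImage ∧
      (X ^ 2 + X : Polynomial ℂ) * X ^ (n+1) ∈ zhuImage := by
    intro n
    induction n with
    | zero => exact ⟨by simpa using f_mem, by simpa using fX_mem⟩
    | succ m ih =>
      refine ⟨ih.2, ?_⟩
      have h : (X ^ 2 + X : Polynomial ℂ) * X ^ (m+2)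
          = (X ^ 2 + X) * ((X ^ 2 + X) * X ^ m) - (X ^ 2 + X) * X ^ (m+1) := by
        ring
      rw [h]
      exact zhuImage.sub_mem (zhuImage.mul_mem f_mem ih.1) ih.2
  exact fun n => (key n).1

lemma fmul_mem (h : Polynomial ℂ) : (X ^ 2 + X : Polynomial ℂ) * h ∈ zhuImage := by
  induction h using Polynomial.induction_on' with
  | add p q hp hq => rw [mul_add]; exact zhuImage.add_mem hp hq
  | monomial n a =>
    have : (X ^ 2 + X : Polynomial ℂ) * monomial n a = a • ((X ^ 2 + X) * X ^ n) := by
      rw [← C_mul_X_pow_eq_monomial, smul_eq_C_mul]; ring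
    rw [this]
    exact zhuImage.smul_mem (fXpow_mem n) _

lemma mem_of_eval_eq {p : Polynomial ℂ} (hp : p.eval 0 = p.eval (-1)) :
    p ∈ zhuImage := by
  have h0 : (X - C (0:ℂ)) ∣ (p - C (p.eval 0)) := by
    rw [dvd_iff_isRoot]; simp [IsRoot]
  have h1 : (X - C (-1:ℂ)) ∣ (p - C (p.eval 0)) := by
    rw [dvd_iff_isRoot]; simp [IsRoot, hp]
  have hco : IsCoprime (X - C (0:ℂ)) (X - C (-1:ℂ)) :=
    ⟨-1, 1, by rw [map_zero, map_neg, map_one]; ring⟩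
  obtain ⟨h, hh⟩ := hco.mul_dvd h0 h1
  have hfact : (X - C (0:ℂ)) * (X - C (-1:ℂ)) = X ^ 2 + X := by
    rw [map_zero, map_neg, map_one]; ring
  rw [hfact] at hh
  have hpq : p = C (p.eval 0) + (X ^ 2 + X) * h := by
    rw [← hh]; ring
  rw [hpq]
  exact zhuImage.add_mem (zhuImage.algebraMap_mem _) (fmul_mem h)

/-- `ℂ[X]` is the internal direct sum of the subalgebra `A` generated by
`X² + X` and `2X³ + 3X² + X` and the line `ℂ·X`: every polynomial is uniquely an element
of `A` plus a scalar multiple of `X`; in particular `X ∉ A`. -/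
theorem stmt12 :
    (∀ p : Polynomial ℂ, ∃! qc : zhuImage × ℂ,
      p = (qc.1 : Polynomial ℂ) + qc.2 • X) ∧
    (X : Polynomial ℂ) ∉ zhuImage := by

  have key : ∀ {q : Polynomial ℂ} {d : ℂ}, q ∈ zhuImage → q + d • X = 0 → d = 0 := by
    intro q d hq hqd
    have h0 := eval_eq_of_mem hq
    have e0 : q.eval 0 + d * (0:ℂ) = 0 := by
      have := congrArg (eval 0) hqd; simpa [smul_eq_C_mul] using this
    have e1 : q.eval (-1) + d * (-1:ℂ) = 0 := by
      have := congrArg (eval (-1)) hqd; simpa [smul_eq_C_mul] using this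
    have : q.eval 0 - d = 0 := by rw [h0]; linear_combination e1
    simp at e0
    linear_combination e0 - this
  constructor
  · intro p
    have hq : p - (p.eval 0 - p.eval (-1)) • X ∈ zhuImage := by
      apply mem_of_eval_eq
      simp only [eval_sub, eval_smul, eval_X, smul_eq_mul]
      ring
    refine ⟨(⟨p - (p.eval 0 - p.eval (-1)) • X, hq⟩, p.eval 0 - p.eval (-1)),
      by push_cast; ring, ?_⟩
    rintro ⟨⟨q, hqm⟩, d⟩ h
    simp only at h
    have hz : (q - (p - (p.eval 0 - p.eval (-1)) • X)) +
        (d - (p.eval 0 - p.eval (-1))) • X = 0 := by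
      have h' : p = q + C d * X := by rw [h, smul_eq_C_mul]
      simp only [smul_eq_C_mul, map_sub]
      linear_combination -h'
    have hmem : q - (p - (p.eval 0 - p.eval (-1)) • X) ∈ zhuImage :=
      zhuImage.sub_mem hqm hq
    have hd : d - (p.eval 0 - p.eval (-1)) = 0 := key hmem hz
    have hd' : d = p.eval 0 - p.eval (-1) := by linear_combination hd
    have hq' : q = p - (p.eval 0 - p.eval (-1)) • X := by
      rw [hd, zero_smul, add_zero, sub_eq_zero] at hz
      exact hz
    simp only [Prod.mk.injEq]
    exact ⟨Subtype.ext hq', hd'⟩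
  · intro hX
    have h := eval_eq_of_mem hX
    rw [eval_X, eval_X] at h
    exact zero_ne_one (by linear_combination -h : (0:ℂ) = 1)


end
end
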